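/- Let H be a normal subgroup of finite index in G with left coset representatives T, let L_T : Mat(m, RG) → Mat(m[G:H], RH) be the left regular representation, let L_{G/H} be the left regular representation of the quotient G/H (with respect to G/H itself as representatives), and write A = ∑_{t∈T} t A_t with A_t ∈ Mat(m, RH). Then L_T(A) = P⁻¹ (∑_{t∈T} L_{G/H}(tH) ⊗ t A_t) P, where P is the block diagonal matrix with blocks t₁I_m,…,t_{[G:H]}I_m and ⊗ denotes the Kronecker product. -/

import Mathlib

open Matrix
open scoped Kronecker

/-- A complex matrix representation is irreducible if its degree is positive and it has
no nontrivial invariant subspaces. -/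
def IsIrrep {G : Type*} [Group G] {n : ℕ} (ρ : G →* Matrix (Fin n) (Fin n) ℂ) : Prop :=
  0 < n ∧ ∀ W : Submodule ℂ (Fin n → ℂ),
    (∀ g : G, ∀ v ∈ W, (ρ g).mulVec v ∈ W) → W = ⊥ ∨ W = ⊤

/-- Equivalence of complex matrix representations. -/
def RepEquiv {G : Type*} [Group G] {n m : ℕ} (ρ : G →* Matrix (Fin n) (Fin n) ℂ)
    (σ : G →* Matrix (Fin m) (Fin m) ℂ) : Prop :=
  ∃ e : (Fin n → ℂ) ≃ₗ[ℂ] (Fin m → ℂ), ∀ g v, e ((ρ g).mulVec v) = (σ g).mulVec (e v)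

/-- `ρ` is a complete set of pairwise inequivalent irreducible complex matrix
representations of `G`. -/
def CompleteIrrepFamily (G : Type*) [Group G] {ι : Type*} (d : ι → ℕ)
    (ρ : ∀ i, G →* Matrix (Fin (d i)) (Fin (d i)) ℂ) : Prop :=
  (∀ i, IsIrrep (ρ i)) ∧
  (∀ i j, i ≠ j → ¬ RepEquiv (ρ i) (ρ j)) ∧
  (∀ (n : ℕ) (σ : G →* Matrix (Fin n) (Fin n) ℂ), IsIrrep σ → ∃ i, RepEquiv σ (ρ i))

/-- The group determinant `Θ(G) = det (x_{g h⁻¹})_{g,h}`. -/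
noncomputable def groupDet (G : Type*) [Group G] [Fintype G] [DecidableEq G] :
    MvPolynomial G ℂ :=
  Matrix.det (Matrix.of fun g h : G => MvPolynomial.X (g * h⁻¹))

/-- For a normal subgroup `H`, `L_T(A) = P⁻¹ (∑_{t ∈ T} L_{G/H}(tH) ⊗ t A_t) P`. -/
theorem leftRegular_normal_kronecker (R : Type*) [CommRing R] (G : Type*) [Group G]
    (H : Subgroup G) [H.Normal] [DecidablePred (· ∈ H)] (m k : ℕ) (t : Fin k → G)
    (ht : ∀ g : G, ∃! i : Fin k, (t i)⁻¹ * g ∈ H)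
    (A : Matrix (Fin m) (Fin m) (MonoidAlgebra R G))
    (At : Fin k → Matrix (Fin m) (Fin m) (MonoidAlgebra R H))
    (hA : ∀ a b, A a b = ∑ i : Fin k,
      MonoidAlgebra.single (t i) (1 : R) *
        MonoidAlgebra.mapDomainAlgHom R R H.subtype ((At i) a b))
    (B : Matrix (Fin k × Fin m) (Fin k × Fin m) (MonoidAlgebra R H))
    (hB : A * (Matrix.of fun (a : Fin m) (p : Fin k × Fin m) =>
            if a = p.2 then MonoidAlgebra.single (t p.1) (1 : R) else 0)
          = (Matrix.of fun (a : Fin m) (p : Fin k × Fin m) =>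
              if a = p.2 then MonoidAlgebra.single (t p.1) (1 : R) else 0)
            * B.map (MonoidAlgebra.mapDomainAlgHom R R H.subtype)) :
    B.map (MonoidAlgebra.mapDomainAlgHom R R H.subtype)
      = (Matrix.of fun (p q : Fin k × Fin m) =>
          if p = q then MonoidAlgebra.single (t p.1)⁻¹ (1 : R) else 0)
        * (∑ i : Fin k,
            ((Matrix.of fun p q : Fin k =>
                if (t p)⁻¹ * (t i * t q) ∈ H then (1 : R) else 0).map
              (algebraMap R (MonoidAlgebra R G)))
            ⊗ₖ ((At i).map fun x =>
                MonoidAlgebra.single (t i) (1 : R) *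
                  MonoidAlgebra.mapDomainAlgHom R R H.subtype x))
        * (Matrix.of fun (p q : Fin k × Fin m) =>
            if p = q then MonoidAlgebra.single (t p.1) (1 : R) else 0) := by
  classical
  set ι : MonoidAlgebra R H →ₐ[R] MonoidAlgebra R G :=
    MonoidAlgebra.mapDomainAlgHom R R H.subtype with hιdef
  have hι0 : ∀ (x : MonoidAlgebra R H) (g : G), g ∉ H → (ι x).coeff g = 0 := by
    intro x g hg
    show Finsupp.mapDomain H.subtype x.coeff g = 0
    apply Finsupp.mapDomain_notin_range
    simpa using hg
  -- key pointwise consequence of hB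
  have key : ∀ (a b : Fin m) (j : Fin k) (g : G),
      ∑ i : Fin k, (ι (At i a b)).coeff ((t i)⁻¹ * (g * (t j)⁻¹))
        = ∑ i : Fin k, (ι (B (i, a) (j, b))).coeff ((t i)⁻¹ * g) := by
    intro a b j g
    have h := congrFun (congrFun hB a) (j, b)
    simp only [Matrix.mul_apply, Matrix.of_apply, Matrix.map_apply, Fintype.sum_prod_type,
      mul_ite, ite_mul, mul_zero, zero_mul, Finset.sum_ite_eq', Finset.sum_ite_eq,
      Finset.mem_univ, if_true, hA] at h
    have h2 : ∀ u : G, ((∑ i : Fin k, MonoidAlgebra.single (t i) (1:R) * ι (At i a b))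
        * MonoidAlgebra.single (t j) (1:R)).coeff u
        = (∑ i : Fin k, MonoidAlgebra.single (t i) (1:R) * ι (B (i, a) (j, b))).coeff u := by
      intro u; rw [h]
    have h3 := h2 g
    rw [Finset.sum_mul] at h3
    rw [show ∀ (f : Fin k → MonoidAlgebra R G) (u : G),
        (∑ i : Fin k, f i).coeff u = ∑ i : Fin k, (f i).coeff u from fun f u => by rw [MonoidAlgebra.coeff_sum, Finset.sum_apply'],
      show ∀ (f : Fin k → MonoidAlgebra R G) (u : G),
        (∑ i : Fin k, f i).coeff u = ∑ i : Fin k, (f i).coeff u from fun f u => by rw [MonoidAlgebra.coeff_sum, Finset.sum_apply']] at h3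
    simpa only [MonoidAlgebra.mul_single_apply,
      MonoidAlgebra.single_mul_apply, one_mul, mul_one, mul_assoc] using h3
  ext ⟨l, a⟩ ⟨j, b⟩ g
  -- compute RHS entry
  have hRHS : ((Matrix.of fun (p q : Fin k × Fin m) =>
          if p = q then MonoidAlgebra.single (t p.1)⁻¹ (1 : R) else 0)
        * (∑ i : Fin k,
            ((Matrix.of fun p q : Fin k =>
                if (t p)⁻¹ * (t i * t q) ∈ H then (1 : R) else 0).map
              (algebraMap R (MonoidAlgebra R G)))
            ⊗ₖ ((At i).map fun x =>
                MonoidAlgebra.single (t i) (1 : R) * ι x))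
        * (Matrix.of fun (p q : Fin k × Fin m) =>
            if p = q then MonoidAlgebra.single (t p.1) (1 : R) else 0)) (l, a) (j, b)
      = MonoidAlgebra.single (t l)⁻¹ (1 : R)
        * (∑ i : Fin k, if (t l)⁻¹ * (t i * t j) ∈ H then
            MonoidAlgebra.single (t i) (1 : R) * ι (At i a b) else 0)
        * MonoidAlgebra.single (t j) (1 : R) := by
    simp only [Matrix.mul_apply, Matrix.of_apply, Matrix.sum_apply, Matrix.map_apply,
      Matrix.kroneckerMap_apply, mul_ite, ite_mul, mul_zero, zero_mul,
      Finset.sum_ite_eq', Finset.sum_ite_eq, Finset.mem_univ, if_true]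
    congr 2
    refine Finset.sum_congr rfl fun i _ => ?_
    split <;> simp [← MonoidAlgebra.one_def]
  rw [Matrix.map_apply]
  show (ι (B (l, a) (j, b))).coeff g = _
  rw [hRHS]
  rw [MonoidAlgebra.mul_single_apply, MonoidAlgebra.single_mul_apply, inv_inv, mul_one, one_mul]
  have sumapp : ∀ (f : Fin k → MonoidAlgebra R G) (u : G),
      (∑ i : Fin k, f i).coeff u = ∑ i : Fin k, (f i).coeff u := fun f u => by rw [MonoidAlgebra.coeff_sum, Finset.sum_apply']
  rw [sumapp]
  -- now goal: ι (B (l,a)(j,b)) g = ∑ i, (if cond i then single (t i) 1 * ι (At i a b) else 0) (t l * (g * (t j)⁻¹))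
  have hterm : ∀ i : Fin k,
      ((if (t l)⁻¹ * (t i * t j) ∈ H then
          MonoidAlgebra.single (t i) (1 : R) * ι (At i a b) else 0) : MonoidAlgebra R G).coeff
        (t l * (g * (t j)⁻¹))
      = if (t l)⁻¹ * (t i * t j) ∈ H then
          (ι (At i a b)).coeff ((t i)⁻¹ * (t l * (g * (t j)⁻¹))) else 0 := by
    intro i
    split
    · rw [MonoidAlgebra.single_mul_apply, one_mul]
    · rfl
  simp only [hterm]
  by_cases hg : g ∈ H
  · -- RHS of key at (t l * g) collapses to ι (B (l,a)(j,b)) g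
    have hkey := key a b j (t l * g)
    have hcol : ∑ i : Fin k, (ι (B (i, a) (j, b))).coeff ((t i)⁻¹ * (t l * g))
        = (ι (B (l, a) (j, b))).coeff g := by
      rw [Finset.sum_eq_single l]
      · rw [inv_mul_cancel_left]
      · intro i _ hil
        apply hι0
        intro hmem
        exact hil ((ht (t l * g)).unique hmem (by rwa [inv_mul_cancel_left]))
      · simp
    rw [← hcol, ← hkey]
    refine Finset.sum_congr rfl fun i _ => ?_
    rw [mul_assoc]
    split
    · rfl
    · rename_i hcond
      refine hι0 _ _ fun hmem => hcond ?_
      -- from hmem : (t i)⁻¹ * (t l * (g * (t j)⁻¹)) ∈ H and hg : g ∈ H derive cond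
      have h1 : (t j)⁻¹ * ((t i)⁻¹ * (t l * (g * (t j)⁻¹)))⁻¹ * ((t j)⁻¹)⁻¹ ∈ H :=
        Subgroup.Normal.conj_mem ‹H.Normal› _ (H.inv_mem hmem) _
      have h2 := H.mul_mem hg h1
      have : g * ((t j)⁻¹ * ((t i)⁻¹ * (t l * (g * (t j)⁻¹)))⁻¹ * ((t j)⁻¹)⁻¹)
          = (t l)⁻¹ * (t i * t j) := by group
      rwa [this] at h2
  · -- both sides vanish
    rw [hι0 _ _ hg]
    refine (Finset.sum_eq_zero fun i _ => ?_).symm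
    split
    · rename_i hcond
      refine hι0 _ _ fun hmem => hg ?_
      have h1 : (t j)⁻¹ * ((t i)⁻¹ * (t l * (g * (t j)⁻¹))) * ((t j)⁻¹)⁻¹ ∈ H :=
        Subgroup.Normal.conj_mem ‹H.Normal› _ hmem _
      have h2 := H.mul_mem hcond h1
      have : ((t l)⁻¹ * (t i * t j)) * ((t j)⁻¹ * ((t i)⁻¹ * (t l * (g * (t j)⁻¹))) * ((t j)⁻¹)⁻¹)
          = g := by group
      rwa [this] at h2
    · rfl
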